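/- Let g ∈ U(2) with g ≠ 1, acting on S = ℂ[X,Y] by (g·f)(v) = f(g⁻¹v). Let 𝔓 be a nonzero homogeneous prime ideal of S with 𝔓 ≠ (X,Y), and suppose that g·f − f ∈ 𝔓 for every f ∈ S. Then there is a nonzero linear form a ∈ ℂX + ℂY such that 𝔓 = Sa is the principal ideal generated by a, and g fixes the line P = {v ∈ ℂ² : a(v) = 0} pointwise. -/
import Mathlib


open Matrix MvPolynomial

/-- The action of a unitary matrix `g` on polynomial functions on ℂ²:
`(g · f)(v) = f(g⁻¹ v)`. -/
noncomputable def actU2 (g : Matrix.unitaryGroup (Fin 2) ℂ) :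
    MvPolynomial (Fin 2) ℂ →ₐ[ℂ] MvPolynomial (Fin 2) ℂ :=
  MvPolynomial.aeval fun i =>
    ∑ j : Fin 2, MvPolynomial.C
      (((g⁻¹ : Matrix.unitaryGroup (Fin 2) ℂ) : Matrix (Fin 2) (Fin 2) ℂ) i j) *
        MvPolynomial.X j

open Matrix MvPolynomial

namespace RamifiedAux

local notation "S" => MvPolynomial (Fin 2) ℂ

lemma aeval_homog_line {n : ℕ} (k : Fin 2) (w : Fin 2 → ℂ)
    (h : S) (hh : h.IsHomogeneous n) :
    ∃ c : ℂ, aeval (fun j => C (w j) * X k) h = C c * X k ^ n := by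
  classical
  refine ⟨∑ d ∈ h.support, coeff d h * ∏ j, w j ^ d j, ?_⟩
  conv_lhs => rw [h.as_sum]
  rw [map_sum, map_sum, Finset.sum_mul]
  refine Finset.sum_congr rfl fun d hd => ?_
  have hdeg : ∑ j, d j = n := by
    have h1 := hh (mem_support_iff.mp hd)
    rw [Finsupp.weight_apply, Finsupp.sum_fintype] at h1
    · simpa using h1
    · intro i; simp
  rw [aeval_monomial, Finsupp.prod_fintype _ _ (fun j => pow_zero _)]
  simp only [mul_pow, ← C_pow]
  rw [Finset.prod_mul_distrib, ← map_prod, Finset.prod_pow_eq_pow_sum, hdeg]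
  simp [algebraMap_eq, C_mul, mul_assoc]

lemma sub_aeval_mem (a : S) (F : Fin 2 → S)
    (hF : ∀ j, X j - F j ∈ Ideal.span {a}) (h : S) :
    h - aeval F h ∈ Ideal.span {a} := by
  set I := Ideal.span {a} with hI
  have key : (Ideal.Quotient.mkₐ ℂ I).comp (aeval F) = Ideal.Quotient.mkₐ ℂ I := by
    apply MvPolynomial.algHom_ext
    intro j
    simp only [AlgHom.comp_apply, aeval_X, Ideal.Quotient.mkₐ_eq_mk]
    exact (Ideal.Quotient.eq.mpr (hF j)).symm
  have h2 : Ideal.Quotient.mk I (aeval F h) = Ideal.Quotient.mk I h := by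
    have := congrArg (fun φ : S →ₐ[ℂ] S ⧸ I => φ h) key
    simpa using this
  have := Ideal.Quotient.eq.mp h2
  simpa using I.neg_mem this

lemma span_eq_of_line (𝔓 : Ideal S) (h𝔓 : 𝔓.IsPrime)
    (hirr : 𝔓 ≠ Ideal.span {X 0, X 1})
    (hhom : ∀ f ∈ 𝔓, ∀ n : ℕ, homogeneousComponent n f ∈ 𝔓)
    (a : S) (ha : a ∈ 𝔓) (k : Fin 2) (w : Fin 2 → ℂ)
    (hw : ∀ j, X j - C (w j) * X k ∈ Ideal.span {a}) :
    𝔓 ≤ Ideal.span {a} := by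
  classical
  have hspan : Ideal.span {a} ≤ 𝔓 := by
    rw [Ideal.span_le]; simpa using ha
  -- 𝔓 is contained in the irrelevant ideal
  have hsub : 𝔓 ≤ Ideal.span {X 0, X 1} := by
    intro f hf
    have h0 : homogeneousComponent 0 f ∈ 𝔓 := hhom f hf 0
    rw [homogeneousComponent_zero] at h0
    have hc : coeff 0 f = 0 := by
      by_contra hc
      apply h𝔓.ne_top
      rw [Ideal.eq_top_iff_one]
      have : (1 : S) = C (coeff 0 f)⁻¹ * C (coeff 0 f) := by
        rw [← C_mul, inv_mul_cancel₀ hc, C_1]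
      rw [this]
      exact Ideal.mul_mem_left _ _ h0
    have himg : ({X 0, X 1} : Set S) = MvPolynomial.X '' Set.univ := by
      ext x
      constructor
      · rintro (rfl | rfl) <;> exact ⟨_, Set.mem_univ _, rfl⟩
      · rintro ⟨i, -, rfl⟩
        fin_cases i
        · exact Or.inl rfl
        · exact Or.inr rfl
    rw [himg, mem_ideal_span_X_image]
    intro m hm
    by_contra hmm
    push_neg at hmm
    have : m = 0 := by
      ext i; simpa using hmm i (Set.mem_univ i)
    rw [this] at hm
    exact (mem_support_iff.mp hm) hc
  -- X k is not in 𝔓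
  have hXk : X k ∉ 𝔓 := by
    intro hXk
    apply hirr
    refine le_antisymm hsub ?_
    rw [Ideal.span_le]
    rintro x (rfl | rfl)
    · have := hw 0
      have h1 : X (0 : Fin 2) = (X 0 - C (w 0) * X k) + C (w 0) * X k := by ring
      rw [h1]
      exact 𝔓.add_mem (hspan this) (Ideal.mul_mem_left _ _ hXk)
    · have := hw 1
      have h1 : X (1 : Fin 2) = (X 1 - C (w 1) * X k) + C (w 1) * X k := by ring
      rw [h1]
      exact 𝔓.add_mem (hspan this) (Ideal.mul_mem_left _ _ hXk)
  -- homogeneous elements of 𝔓 lie in (a)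
  have key : ∀ n : ℕ, ∀ h ∈ 𝔓, h.IsHomogeneous n → h ∈ Ideal.span {a} := by
    intro n h hmem hhn
    obtain ⟨c, hc⟩ := aeval_homog_line k w h hhn
    have hd : h - aeval (fun j => C (w j) * X k) h ∈ Ideal.span {a} :=
      sub_aeval_mem a _ hw h
    have hφ : C c * X k ^ n ∈ 𝔓 := by
      rw [← hc]
      have : aeval (fun j => C (w j) * X k) h
          = h - (h - aeval (fun j => C (w j) * X k) h) := by ring
      rw [this]
      exact 𝔓.sub_mem hmem (hspan hd)
    have hc0 : c = 0 := by
      by_contra hc0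
      have hpow : X k ^ n ∈ 𝔓 := by
        have : (X k ^ n : S) = C c⁻¹ * (C c * X k ^ n) := by
          rw [← mul_assoc, ← C_mul, inv_mul_cancel₀ hc0, C_1, one_mul]
        rw [this]
        exact Ideal.mul_mem_left _ _ hφ
      rcases Nat.eq_zero_or_pos n with rfl | hn
      · rw [pow_zero] at hpow
        exact h𝔓.ne_top (Ideal.eq_top_iff_one _ |>.mpr hpow)
      · exact hXk ((h𝔓.pow_mem_iff_mem n hn).mp hpow)
    rw [hc0, map_zero, zero_mul] at hc
    have : h = h - aeval (fun j => C (w j) * X k) h := by rw [hc]; ring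
    rw [this]
    exact hd
  intro f hf
  rw [← sum_homogeneousComponent f]
  refine Ideal.sum_mem _ fun n _ => ?_
  exact key n _ (hhom f hf n) (homogeneousComponent_isHomogeneous n f)

end RamifiedAux

open RamifiedAux

theorem ramified_prime_is_line
    (g : Matrix.unitaryGroup (Fin 2) ℂ) (hg : g ≠ 1)
    (𝔓 : Ideal (MvPolynomial (Fin 2) ℂ)) (h𝔓 : 𝔓.IsPrime)
    (hne : 𝔓 ≠ ⊥)
    (hirr : 𝔓 ≠ Ideal.span {MvPolynomial.X 0, MvPolynomial.X 1})
    (hhom : ∀ f ∈ 𝔓, ∀ n : ℕ, MvPolynomial.homogeneousComponent n f ∈ 𝔓)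
    (hfix : ∀ f : MvPolynomial (Fin 2) ℂ, actU2 g f - f ∈ 𝔓) :
    ∃ a : MvPolynomial (Fin 2) ℂ, a ≠ 0 ∧ a.IsHomogeneous 1 ∧
      𝔓 = Ideal.span {a} ∧
      ∀ v : Fin 2 → ℂ, MvPolynomial.eval v a = 0 →
        (g : Matrix (Fin 2) (Fin 2) ℂ).mulVec v = v := by
  classical
  set m : Matrix (Fin 2) (Fin 2) ℂ :=
    ((g⁻¹ : Matrix.unitaryGroup (Fin 2) ℂ) : Matrix (Fin 2) (Fin 2) ℂ) with hm
  -- m ≠ 1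
  have hm1 : m ≠ 1 := by
    intro h
    apply hg
    have : (g⁻¹ : Matrix.unitaryGroup (Fin 2) ℂ) = 1 := Subtype.coe_injective h
    exact inv_eq_one.mp this
  obtain ⟨i, j, hij⟩ : ∃ i j, m i j ≠ (1 : Matrix (Fin 2) (Fin 2) ℂ) i j := by
    by_contra h
    push_neg at h
    exact hm1 (Matrix.ext h)
  -- the action on X i'
  have hact : ∀ i' : Fin 2, actU2 g (X i') = C (m i' 0) * X 0 + C (m i' 1) * X 1 := by
    intro i'
    rw [actU2, aeval_X, Fin.sum_univ_two]
  set p : ℂ := m i 0 - (1 : Matrix (Fin 2) (Fin 2) ℂ) i 0 with hp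
  set q : ℂ := m i 1 - (1 : Matrix (Fin 2) (Fin 2) ℂ) i 1 with hq
  set a : MvPolynomial (Fin 2) ℂ := C p * X 0 + C q * X 1 with hadef
  have haeq : a = actU2 g (X i) - X i := by
    rw [hact i, hadef, hp, hq]
    fin_cases i <;>
      simp [Matrix.one_apply, map_sub] <;> ring
  have hpq : p ≠ 0 ∨ q ≠ 0 := by
    fin_cases j
    · left; rw [hp]; exact sub_ne_zero.mpr hij
    · right; rw [hq]; exact sub_ne_zero.mpr hij
  have ha𝔓 : a ∈ 𝔓 := haeq ▸ hfix (X i)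
  -- a ≠ 0
  have hane : a ≠ 0 := by
    intro h0
    have hco : ∀ k : Fin 2, coeff (Finsupp.single k 1) a = 0 := by
      intro k; rw [h0]; simp
    have hc0 := hco 0
    have hc1 := hco 1
    rw [hadef] at hc0 hc1
    simp [coeff_add, coeff_C_mul, coeff_X', Finsupp.single_eq_single_iff] at hc0 hc1
    rcases hpq with h | h
    · exact h hc0
    · exact h hc1
  -- a is homogeneous of degree 1
  have hahom : a.IsHomogeneous 1 := by
    have h0 : (C p * X 0 : MvPolynomial (Fin 2) ℂ).IsHomogeneous 1 := by
      simpa using (isHomogeneous_C (Fin 2) p).mul (isHomogeneous_X ℂ 0)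
    have h1 : (C q * X 1 : MvPolynomial (Fin 2) ℂ).IsHomogeneous 1 := by
      simpa using (isHomogeneous_C (Fin 2) q).mul (isHomogeneous_X ℂ 1)
    exact h0.add h1
  -- 𝔓 = span {a}
  have hspan : 𝔓 = Ideal.span {a} := by
    refine le_antisymm ?_ ?_
    · rcases eq_or_ne q 0 with hq0 | hq0
      · have hp0 : p ≠ 0 := by
          rcases hpq with h | h
          · exact h
          · exact absurd hq0 h
        have hCp : (C p : MvPolynomial (Fin 2) ℂ) * C p⁻¹ = 1 := by
          rw [← C_mul, mul_inv_cancel₀ hp0, C_1]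
        refine span_eq_of_line 𝔓 h𝔓 hirr hhom a ha𝔓 1 ![0, 1] ?_
        intro j'
        rw [Ideal.mem_span_singleton]
        fin_cases j'
        · refine ⟨C p⁻¹, ?_⟩
          show X 0 - C (0:ℂ) * X 1 = a * C p⁻¹
          simp only [hadef, hq0, map_zero, zero_mul, sub_zero, add_zero]
          linear_combination (-X 0 : MvPolynomial (Fin 2) ℂ) * hCp
        · refine ⟨0, by simp⟩
      · have hCq : (C q : MvPolynomial (Fin 2) ℂ) * C q⁻¹ = 1 := by
          rw [← C_mul, mul_inv_cancel₀ hq0, C_1]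
        refine span_eq_of_line 𝔓 h𝔓 hirr hhom a ha𝔓 0 ![1, -p/q] ?_
        intro j'
        rw [Ideal.mem_span_singleton]
        fin_cases j'
        · refine ⟨0, by simp⟩
        · refine ⟨C q⁻¹, ?_⟩
          show X 1 - C (-p/q) * X 0 = a * C q⁻¹
          have hC : (C (-p/q) : MvPolynomial (Fin 2) ℂ) = -(C p * C q⁻¹) := by
            rw [neg_div, map_neg, div_eq_mul_inv, C_mul]
          simp only [hadef, hC]
          linear_combination (-X 1 : MvPolynomial (Fin 2) ℂ) * hCq
    · rw [Ideal.span_le]; simpa using ha𝔓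
  refine ⟨a, hane, hahom, hspan, ?_⟩
  intro v hv
  -- g⁻¹ v = v
  have hminv : m.mulVec v = v := by
    funext i'
    have hmem : actU2 g (X i') - X i' ∈ Ideal.span {a} := hspan ▸ hfix (X i')
    obtain ⟨c, hc⟩ := Ideal.mem_span_singleton.mp hmem
    have := congrArg (MvPolynomial.eval v) hc
    rw [_root_.map_sub, _root_.map_mul, hv, zero_mul, hact i'] at this
    have h2 : eval v (C (m i' 0) * X 0 + C (m i' 1) * X 1) = eval v (X i') :=
      sub_eq_zero.mp this
    simp only [map_add, _root_.map_mul, eval_C, eval_X] at h2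
    simpa [Matrix.mulVec, dotProduct, Fin.sum_univ_two] using h2
  have hgm : (g : Matrix (Fin 2) (Fin 2) ℂ) * m = 1 := by
    rw [hm]
    have : g * g⁻¹ = 1 := mul_inv_cancel g
    calc (g : Matrix (Fin 2) (Fin 2) ℂ) * ((g⁻¹ : Matrix.unitaryGroup (Fin 2) ℂ) :
          Matrix (Fin 2) (Fin 2) ℂ)
        = ((g * g⁻¹ : Matrix.unitaryGroup (Fin 2) ℂ) : Matrix (Fin 2) (Fin 2) ℂ) := rfl
      _ = 1 := by rw [this]; rfl
  calc (g : Matrix (Fin 2) (Fin 2) ℂ).mulVec v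
      = (g : Matrix (Fin 2) (Fin 2) ℂ).mulVec (m.mulVec v) := by rw [hminv]
    _ = ((g : Matrix (Fin 2) (Fin 2) ℂ) * m).mulVec v := by rw [Matrix.mulVec_mulVec]
    _ = v := by rw [hgm, Matrix.one_mulVec]
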